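/- Combining the clique bound and correctness: under the syndrome-graph decoding setting with N ≥ T + ⌊T²/4⌋ + 2 and at most T altered packets, the decoder identifies a set V* of at least N − T − ⌊T²/4⌋ − 1 indices i with ȳ_i = y_i. -/

import Mathlib

open scoped RealInnerProductSpace

private lemma nat_div4 (T : ℕ) : (T + 2)^2 / 4 = T + T^2/4 + 1 := by
  have h : (T + 2)^2 = T^2 + 4*(T+1) := by ring
  rw [h, Nat.add_mul_div_left _ _ (by norm_num : (0:ℕ) < 4)]
  omega

/-- The key combinatorial sub-lemma: greedy covering with marginal accounting. -/
private lemma sub_lemma {ι κ : Type*} [DecidableEq ι] [DecidableEq κ]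
    (X : ι → Finset κ) (t M : ℕ) (htM : t + 1 ≤ M) :
    ∀ (R : Finset ι), (∀ j ∈ R, t + 1 ≤ (X j).card) →
      ∀ (Y : Finset κ),
      (∀ j ∈ R, ∃ C : Finset ι, C ⊆ R ∧ j ∈ C ∧
        ((C.card ≤ M + 1 ∧ (C.biUnion X).card ≤ t + C.card) ∨ ((C.biUnion X \ Y).card ≤ M))) →
      ((R.biUnion X) \ Y).card ≤ R.card * M := by
  intro R
  induction R using Finset.strongInduction with
  | _ R ih =>
    intro hβ Y hcliq
    rcases R.eq_empty_or_nonempty with rfl | ⟨j₀, hj₀⟩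
    · simp
    · obtain ⟨C, hCR, hjC, htype⟩ := hcliq j₀ hj₀
      have hCne : C.Nonempty := ⟨j₀, hjC⟩
      have hc1 : 1 ≤ C.card := Finset.card_pos.mpr hCne
      -- contribution of the removed clique
      have hcontrib : ((C.biUnion X) \ Y).card ≤ C.card * M := by
        rcases htype with ⟨_, hcap⟩ | hcap
        · calc ((C.biUnion X) \ Y).card ≤ (C.biUnion X).card :=
                Finset.card_le_card (Finset.sdiff_subset)
            _ ≤ t + C.card := hcap
            _ ≤ C.card * M := by nlinarith
        · calc ((C.biUnion X) \ Y).card ≤ M := hcap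
            _ ≤ C.card * M := by nlinarith
      have hR'ss : R \ C ⊂ R := Finset.sdiff_ssubset hCR hCne
      -- hypotheses for the recursion
      have hrec : (((R \ C).biUnion X) \ (Y ∪ C.biUnion X)).card ≤ (R \ C).card * M := by
        refine ih (R \ C) hR'ss (fun j hj => hβ j (Finset.mem_sdiff.mp hj).1) _ ?_
        intro j hj
        obtain ⟨hjR, hjnC⟩ := Finset.mem_sdiff.mp hj
        obtain ⟨D, hDR, hjD, htyD⟩ := hcliq j hjR
        rcases (D ∩ C).eq_empty_or_nonempty with hem | ⟨j', hj'⟩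
        · -- disjoint from removed clique : keep it
          have hDsub : D ⊆ R \ C := by
            intro a ha
            refine Finset.mem_sdiff.mpr ⟨hDR ha, fun hac => ?_⟩
            have : a ∈ D ∩ C := Finset.mem_inter.mpr ⟨ha, hac⟩
            simp [hem] at this
          refine ⟨D, hDsub, hjD, ?_⟩
          rcases htyD with ⟨hsz, hcap⟩ | hcap
          · exact Or.inl ⟨hsz, hcap⟩
          · refine Or.inr (le_trans (Finset.card_le_card ?_) hcap)
            intro e he
            obtain ⟨he1, he2⟩ := Finset.mem_sdiff.mp he
            exact Finset.mem_sdiff.mpr ⟨he1, fun hY => he2 (Finset.mem_union_left _ hY)⟩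
        · -- overlapping : downgrade
          obtain ⟨hj'D, hj'C⟩ := Finset.mem_inter.mp hj'
          have hDsub : D \ C ⊆ R \ C := by
            intro a ha
            obtain ⟨haD, haC⟩ := Finset.mem_sdiff.mp ha
            exact Finset.mem_sdiff.mpr ⟨hDR haD, haC⟩
          refine ⟨D \ C, hDsub, Finset.mem_sdiff.mpr ⟨hjD, hjnC⟩, Or.inr ?_⟩
          have hXj' : X j' ⊆ Y ∪ C.biUnion X := fun e he =>
            Finset.mem_union_right _ (Finset.mem_biUnion.mpr ⟨j', hj'C, he⟩)
          have hdisj : Disjoint (((D \ C).biUnion X) \ (Y ∪ C.biUnion X)) (X j') :=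
            Finset.disjoint_left.mpr (fun e he hee => (Finset.mem_sdiff.mp he).2 (hXj' hee))
          have hsubU : (((D \ C).biUnion X) \ (Y ∪ C.biUnion X)) ∪ X j' ⊆ D.biUnion X := by
            apply Finset.union_subset
            · intro e he
              obtain ⟨heB, _⟩ := Finset.mem_sdiff.mp he
              obtain ⟨a, ha, hea⟩ := Finset.mem_biUnion.mp heB
              exact Finset.mem_biUnion.mpr ⟨a, (Finset.mem_sdiff.mp ha).1, hea⟩
            · intro e he
              exact Finset.mem_biUnion.mpr ⟨j', hj'D, he⟩
          have hcard := Finset.card_le_card hsubU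
          rw [Finset.card_union_of_disjoint hdisj] at hcard
          have hβj' := hβ j' (hDR hj'D)
          rcases htyD with ⟨hsz, hcap⟩ | hcap
          · -- |D.biUnion X| ≤ t + |D| ≤ t + M + 1, |X j'| ≥ t+1
            have : (D.biUnion X).card ≤ t + D.card := hcap
            omega
          · -- old type-b
            refine le_trans (Finset.card_le_card ?_) hcap
            intro e he
            obtain ⟨heB, heY⟩ := Finset.mem_sdiff.mp he
            obtain ⟨a, ha, hea⟩ := Finset.mem_biUnion.mp heB
            refine Finset.mem_sdiff.mpr ⟨Finset.mem_biUnion.mpr ⟨a, (Finset.mem_sdiff.mp ha).1, hea⟩,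
              fun hY => heY (Finset.mem_union_left _ hY)⟩
      -- split
      have hsplit : (R.biUnion X) \ Y ⊆
          ((C.biUnion X) \ Y) ∪ (((R \ C).biUnion X) \ (Y ∪ C.biUnion X)) := by
        intro e he
        obtain ⟨heU, heY⟩ := Finset.mem_sdiff.mp he
        obtain ⟨j, hjR, hej⟩ := Finset.mem_biUnion.mp heU
        by_cases hjC2 : j ∈ C
        · exact Finset.mem_union_left _ (Finset.mem_sdiff.mpr
            ⟨Finset.mem_biUnion.mpr ⟨j, hjC2, hej⟩, heY⟩)
        · by_cases heC : e ∈ C.biUnion X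
          · exact Finset.mem_union_left _ (Finset.mem_sdiff.mpr ⟨heC, heY⟩)
          · refine Finset.mem_union_right _ (Finset.mem_sdiff.mpr
              ⟨Finset.mem_biUnion.mpr ⟨j, Finset.mem_sdiff.mpr ⟨hjR, hjC2⟩, hej⟩, ?_⟩)
            simp only [Finset.mem_union]
            tauto
      have hCsubcard : C.card ≤ R.card := Finset.card_le_card hCR
      calc ((R.biUnion X) \ Y).card
          ≤ (((C.biUnion X) \ Y) ∪ (((R \ C).biUnion X) \ (Y ∪ C.biUnion X))).card :=
            Finset.card_le_card hsplit
        _ ≤ ((C.biUnion X) \ Y).card + (((R \ C).biUnion X) \ (Y ∪ C.biUnion X)).card :=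
            Finset.card_union_le _ _
        _ ≤ C.card * M + (R \ C).card * M := Nat.add_le_add hcontrib hrec
        _ = (C.card + (R \ C).card) * M := (Nat.add_mul _ _ _).symm
        _ = R.card * M := by rw [Finset.card_sdiff_of_subset hCR]; congr 1; omega

set_option maxHeartbeats 2000000 in
/-- Combining the clique bound and correctness: with
N ≥ T + ⌊T²/4⌋ + 2 and at most T altered packets, the decoder's set V*
has at least N - T - ⌊T²/4⌋ - 1 indices i, all with ȳ_i = y_i. -/
theorem stmt_12 (N T N₀ : ℕ) (hT : 1 ≤ T) (hN : T + T ^ 2 / 4 + 2 ≤ N)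
    (A : Matrix (Fin N) (Fin (N - T)) ℝ)
    (hA : ∀ e : Fin (N - T) → Fin N, Function.Injective e →
      (Matrix.of fun i j : Fin (N - T) => A (e i) j).det ≠ 0)
    (x : Fin (N - T) → EuclideanSpace ℝ (Fin N₀))
    (y ybar : Fin N → EuclideanSpace ℝ (Fin N₀))
    (hy : ∀ i, y i = ∑ j, A i j • x j)
    (hunalt : ∃ U : Finset (Fin N), N - T ≤ U.card ∧ ∀ i ∈ U, ybar i = y i)
    (Edge : Fin N → Fin N → Prop)
    (hEdge : ∀ i j, Edge i j ↔ ⟪ybar i, ybar j⟫ = ⟪y i, y j⟫)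
    (V' : Set (Fin N))
    (hV' : V' = {i : Fin N | ∃ s : Finset (Fin N),
      (∀ a ∈ s, ∀ b ∈ s, Edge a b) ∧ N - T ≤ s.card ∧ i ∈ s})
    (Vstar : Set (Fin N))
    (hVstar : Vstar = {i ∈ V' | Edge i i ∧ ∀ j ∈ V', Edge i j}) :
    N - (T + T ^ 2 / 4 + 1) ≤ Vstar.ncard ∧ ∀ i ∈ Vstar, ybar i = y i := by
  classical
  obtain ⟨U, hUcard, hU⟩ := hunalt
  set Good : Finset (Fin N) := Finset.univ.filter (fun i => ybar i = y i) with hGoodDef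
  have hGoodmem : ∀ i, i ∈ Good ↔ ybar i = y i := by
    intro i; simp [hGoodDef]
  have hUG : U ⊆ Good := fun i hi => (hGoodmem i).mpr (hU i hi)
  have hGcard : N - T ≤ Good.card := le_trans hUcard (Finset.card_le_card hUG)
  have hGN : Good.card ≤ N := by
    calc Good.card ≤ (Finset.univ : Finset (Fin N)).card := Finset.card_le_univ _
      _ = N := by simp
  -- inner product expansion along rows of A
  have hinner : ∀ (v : EuclideanSpace ℝ (Fin N₀)) (i : Fin N),
      ⟪v, y i⟫ = ∑ l, A i l * ⟪v, x l⟫ := by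
    intro v i
    rw [hy i, inner_sum]
    exact Finset.sum_congr rfl (fun l _ => real_inner_smul_right _ _ _)
  -- Z-lemma : a nonzero coefficient vector has at most N-T-1 zero coordinates in A ⬝ c
  have hZ : ∀ (c : Fin (N - T) → ℝ), c ≠ 0 →
      (Finset.univ.filter (fun i : Fin N => ∑ l, A i l * c l = 0)).card + T + 1 ≤ N := by
    intro c hc
    by_contra hcon
    push_neg at hcon
    set Z := Finset.univ.filter (fun i : Fin N => ∑ l, A i l * c l = 0) with hZdef
    have hZN : Z.card ≤ N := by
      calc Z.card ≤ (Finset.univ : Finset (Fin N)).card := Finset.card_le_univ _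
        _ = N := by simp
    have hZcard : N - T ≤ Z.card := by omega
    obtain ⟨Z', hZ'sub, hZ'card⟩ := Finset.exists_subset_card_eq hZcard
    have hinj : Function.Injective (fun i => Z'.orderEmbOfFin hZ'card i) :=
      fun a b hab => (Z'.orderEmbOfFin hZ'card).injective hab
    have hdet := hA (fun i => Z'.orderEmbOfFin hZ'card i) hinj
    have hmem : ∀ i : Fin (N - T), (Z'.orderEmbOfFin hZ'card i : Fin N) ∈ Z :=
      fun i => hZ'sub (Z'.orderEmbOfFin_mem hZ'card i)
    set Mx := Matrix.of (fun i j : Fin (N - T) => A (Z'.orderEmbOfFin hZ'card i) j) with hMx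
    have hmv : Mx.mulVec c = 0 := by
      funext i
      have h1 := hmem i
      rw [hZdef, Finset.mem_filter] at h1
      simpa [hMx, Matrix.mulVec, dotProduct] using h1.2
    have hczero : c = 0 := by
      have h1 : Mx⁻¹ * Mx = 1 := Matrix.nonsing_inv_mul Mx (isUnit_iff_ne_zero.mpr hdet)
      calc c = (1 : Matrix (Fin (N-T)) (Fin (N-T)) ℝ).mulVec c := (Matrix.one_mulVec c).symm
        _ = (Mx⁻¹ * Mx).mulVec c := by rw [h1]
        _ = Mx⁻¹.mulVec (Mx.mulVec c) := (Matrix.mulVec_mulVec _ _ _).symm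
        _ = 0 := by rw [hmv, Matrix.mulVec_zero]
    exact hc hczero
  -- KEY: a vector orthogonal to all y_g (g good) is orthogonal to all y_i
  have hkey : ∀ (v : EuclideanSpace ℝ (Fin N₀)),
      (∀ g ∈ Good, ⟪v, y g⟫ = 0) → ∀ i, ⟪v, y i⟫ = 0 := by
    intro v hv i
    by_cases hc0 : (fun l => ⟪v, x l⟫) = (0 : Fin (N - T) → ℝ)
    · rw [hinner v i]
      have : ∀ l, ⟪v, x l⟫ = 0 := fun l => congrFun hc0 l
      simp [this]
    · exfalso
      have hzc := hZ _ hc0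
      have hsub : Good ⊆ Finset.univ.filter (fun i : Fin N => ∑ l, A i l * ⟪v, x l⟫ = 0) := by
        intro g hg
        simp only [Finset.mem_filter, Finset.mem_univ, true_and]
        rw [← hinner v g]
        exact hv g hg
      have := Finset.card_le_card hsub
      omega
  -- rephrasing edges from a good vertex
  have hedge_good : ∀ i j : Fin N, ybar i = y i → (Edge i j ↔ ⟪y i, ybar j - y j⟫ = 0) := by
    intro i j hi
    rw [hEdge i j, hi, inner_sub_right, sub_eq_zero]
  -- all good vertices form a clique, hence Good ⊆ V'
  have hGoodclique : ∀ a ∈ Good, ∀ b ∈ Good, Edge a b := by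
    intro a ha b hb
    rw [hEdge, (hGoodmem a).mp ha, (hGoodmem b).mp hb]
  have hGoodV' : ∀ g ∈ Good, g ∈ V' := by
    intro g hg
    rw [hV']
    exact ⟨Good, hGoodclique, hGcard, hg⟩
  -- correctness of V*
  have hcorrect : ∀ i ∈ Vstar, ybar i = y i := by
    intro i hi
    rw [hVstar] at hi
    obtain ⟨hiV', hiSelf, hiAll⟩ := hi
    have hvy : ∀ k, ⟪ybar i - y i, y k⟫ = 0 := by
      apply hkey
      intro g hg
      have hEg : Edge i g := hiAll g (hGoodV' g hg)
      have h1 : ⟪ybar i, ybar g⟫ = ⟪y i, y g⟫ := (hEdge i g).mp hEg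
      rw [(hGoodmem g).mp hg] at h1
      rw [inner_sub_left, h1, sub_self]
    have hself : ⟪ybar i, ybar i⟫ = ⟪y i, y i⟫ := (hEdge i i).mp hiSelf
    have hyb : ybar i = y i + (ybar i - y i) := by abel
    have hexp : ⟪ybar i, ybar i⟫
        = ⟪y i, y i⟫ + 2 * ⟪y i, ybar i - y i⟫ + ⟪ybar i - y i, ybar i - y i⟫ := by
      conv_lhs => rw [hyb]
      exact real_inner_add_add_self _ _
    have hyiv : ⟪y i, ybar i - y i⟫ = 0 := by
      rw [real_inner_comm]; exact hvy i
    have hvv : ⟪ybar i - y i, ybar i - y i⟫ = (0:ℝ) := by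
      rw [hexp, hyiv] at hself; linarith
    have hz : ybar i - y i = 0 := inner_self_eq_zero.mp hvv
    have := sub_eq_zero.mp hz
    exact this
  -- ============ cardinality bound ============
  set d := N - Good.card with hd
  have hdT : d ≤ T := by omega
  set t := T - d with ht
  set B' : Finset (Fin N) := Finset.univ.filter (fun j => j ∈ V' ∧ ¬(ybar j = y j)) with hB'def
  set X : Fin N → Finset (Fin N) :=
    fun j => Good.filter (fun g => ¬(⟪y g, ybar j - y j⟫ = 0)) with hXdef
  have hXGood : ∀ j, X j ⊆ Good := fun j => Finset.filter_subset _ _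
  -- facts for each bad-but-apparently-consistent vertex
  have hBfacts : ∀ j ∈ B', (t + 1 ≤ (X j).card) ∧ ∃ C : Finset (Fin N),
      C ⊆ B' ∧ j ∈ C ∧ (C.biUnion X).card ≤ t + C.card := by
    intro j hj
    rw [hB'def, Finset.mem_filter] at hj
    obtain ⟨-, hjV', hjbad⟩ := hj
    have hjV2 := hjV'
    rw [hV'] at hjV2
    obtain ⟨s, hs_clique, hs_card, hjs⟩ := hjV2
    -- everything in s lies in V'
    have hsV' : ∀ a ∈ s, a ∈ V' := by
      intro a ha; rw [hV']; exact ⟨s, hs_clique, hs_card, ha⟩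
    set C : Finset (Fin N) := s.filter (fun a => ¬(ybar a = y a)) with hCdef
    have hjC : j ∈ C := Finset.mem_filter.mpr ⟨hjs, hjbad⟩
    have hCsub : C ⊆ B' := by
      intro a ha
      rw [hCdef, Finset.mem_filter] at ha
      rw [hB'def, Finset.mem_filter]
      exact ⟨Finset.mem_univ a, hsV' a ha.1, ha.2⟩
    -- the good part of s
    set Gs : Finset (Fin N) := s.filter (fun a => ybar a = y a) with hGsdef
    have hsplit : Gs.card + C.card = s.card := by
      rw [hGsdef, hCdef]
      exact Finset.card_filter_add_card_filter_not _
    have hGs_sub : Gs ⊆ Good := by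
      intro a ha
      rw [hGsdef, Finset.mem_filter] at ha
      exact (hGoodmem a).mpr ha.2
    have hdisjCG : Disjoint (C.biUnion X) Gs := by
      rw [Finset.disjoint_left]
      intro g hg hgGs
      obtain ⟨j', hj'C, hgX⟩ := Finset.mem_biUnion.mp hg
      rw [hGsdef, Finset.mem_filter] at hgGs
      rw [hCdef, Finset.mem_filter] at hj'C
      have hEg : Edge g j' := hs_clique g hgGs.1 j' hj'C.1
      have := (hedge_good g j' hgGs.2).mp hEg
      rw [hXdef] at hgX
      exact (Finset.mem_filter.mp hgX).2 this
    have hsub2 : (C.biUnion X) ∪ Gs ⊆ Good :=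
      Finset.union_subset (Finset.biUnion_subset.mpr (fun j' _ => hXGood j')) hGs_sub
    have hcard2 : (C.biUnion X).card + Gs.card ≤ Good.card := by
      rw [← Finset.card_union_of_disjoint hdisjCG]
      exact Finset.card_le_card hsub2
    have hsN : s.card ≤ N := by
      calc s.card ≤ (Finset.univ : Finset (Fin N)).card := Finset.card_le_univ _
        _ = N := by simp
    have halpha : (C.biUnion X).card ≤ t + C.card := by omega
    -- β : the conflict set of j has at least t+1 elements
    have hjself : Edge j j := hs_clique j hjs j hjs
    have hself : ⟪ybar j, ybar j⟫ = ⟪y j, y j⟫ := (hEdge j j).mp hjself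
    have hvj0 : ybar j - y j ≠ 0 := sub_ne_zero.mpr hjbad
    have hyjv : ⟪ybar j - y j, y j⟫ ≠ 0 := by
      intro h0
      have hyb : ybar j = y j + (ybar j - y j) := by abel
      have hexp : ⟪ybar j, ybar j⟫
          = ⟪y j, y j⟫ + 2 * ⟪y j, ybar j - y j⟫ + ⟪ybar j - y j, ybar j - y j⟫ := by
        conv_lhs => rw [hyb]
        exact real_inner_add_add_self _ _
      have h2 : ⟪y j, ybar j - y j⟫ = 0 := by rw [real_inner_comm]; exact h0
      rw [hexp, h2] at hself
      have hvv : ⟪ybar j - y j, ybar j - y j⟫ = (0:ℝ) := by linarith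
      exact hvj0 (inner_self_eq_zero.mp hvv)
    have hc0 : (fun l => ⟪ybar j - y j, x l⟫) ≠ (0 : Fin (N - T) → ℝ) := by
      intro h
      apply hyjv
      rw [hinner (ybar j - y j) j]
      have : ∀ l, ⟪ybar j - y j, x l⟫ = 0 := fun l => congrFun h l
      simp [this]
    have hzc := hZ _ hc0
    have hGsubZ : Good ⊆ (X j) ∪
        (Finset.univ.filter (fun i : Fin N => ∑ l, A i l * ⟪ybar j - y j, x l⟫ = 0)) := by
      intro g hg
      by_cases hgX : g ∈ X j
      · exact Finset.mem_union_left _ hgX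
      · refine Finset.mem_union_right _ ?_
        simp only [Finset.mem_filter, Finset.mem_univ, true_and]
        rw [← hinner (ybar j - y j) g]
        rw [hXdef] at hgX
        simp only [Finset.mem_filter, not_and, not_not] at hgX
        rw [real_inner_comm]
        exact hgX hg
    have hcard3 : Good.card ≤ (X j).card +
        (Finset.univ.filter (fun i : Fin N => ∑ l, A i l * ⟪ybar j - y j, x l⟫ = 0)).card :=
      le_trans (Finset.card_le_card hGsubZ) (Finset.card_union_le _ _)
    have hbeta : t + 1 ≤ (X j).card := by omega
    exact ⟨hbeta, C, hCsub, hjC, halpha⟩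
  have hβ : ∀ j ∈ B', t + 1 ≤ (X j).card := fun j hj => (hBfacts j hj).1
  -- choose cliques
  have hchoice : ∀ j : Fin N, ∃ C : Finset (Fin N),
      j ∈ B' → (C ⊆ B' ∧ j ∈ C ∧ (C.biUnion X).card ≤ t + C.card) := by
    intro j
    by_cases hj : j ∈ B'
    · obtain ⟨-, C, h1, h2, h3⟩ := hBfacts j hj
      exact ⟨C, fun _ => ⟨h1, h2, h3⟩⟩
    · exact ⟨∅, fun h => absurd h hj⟩
  choose CL hCL using hchoice
  set E := B'.biUnion X with hEdef
  have hbd : B'.card ≤ d := by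
    have hsubB : B' ⊆ Finset.univ.filter (fun j : Fin N => ¬(ybar j = y j)) := by
      intro a ha
      rw [hB'def, Finset.mem_filter] at ha
      exact Finset.mem_filter.mpr ⟨Finset.mem_univ a, ha.2.2⟩
    have hcardsplit : Good.card +
        (Finset.univ.filter (fun j : Fin N => ¬(ybar j = y j))).card = N := by
      rw [hGoodDef]
      have := Finset.card_filter_add_card_filter_not
        (s := (Finset.univ : Finset (Fin N))) (p := fun i => ybar i = y i)
      simpa using this
    have := Finset.card_le_card hsubB
    omega
  -- main cardinality estimate
  have hEbound : d + E.card ≤ T + T ^ 2 / 4 + 1 := by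
    rcases B'.eq_empty_or_nonempty with hB'e | hBne
    · have : E = ∅ := by rw [hEdef, hB'e]; simp
      rw [this]
      simp only [Finset.card_empty, add_zero]
      calc d ≤ T := hdT
        _ ≤ T + T ^ 2 / 4 + 1 := by rw [add_assoc]; exact Nat.le_add_right _ _
    · have hne : (B'.image fun j => (CL j).card).Nonempty := hBne.image _
      set c := (B'.image fun j => (CL j).card).max' hne with hcdef
      obtain ⟨j₀, hj₀B, hj₀c⟩ := Finset.mem_image.mp ((B'.image fun j => (CL j).card).max'_mem hne)
      have hcmax : ∀ j ∈ B', (CL j).card ≤ c := by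
        intro j hj
        exact Finset.le_max' (B'.image fun j => (CL j).card) _
          (Finset.mem_image_of_mem _ hj)
      obtain ⟨hC0sub, hj₀C0, hC0cap⟩ := hCL j₀ hj₀B
      have hj₀c' : (CL j₀).card = c := by rw [hcdef]; exact hj₀c
      have hc1 : 1 ≤ c := by
        rw [← hj₀c']
        exact Finset.card_pos.mpr ⟨j₀, hj₀C0⟩
      set M := max (t+1) (c-1) with hMdef
      have hsubapp : (((B' \ CL j₀).biUnion X) \ (CL j₀).biUnion X).card
          ≤ (B' \ CL j₀).card * M := by
        apply sub_lemma X t M (le_max_left _ _) _ (fun j hj => hβ j (Finset.mem_sdiff.mp hj).1)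
        intro j hj
        obtain ⟨hjB, hjC0⟩ := Finset.mem_sdiff.mp hj
        obtain ⟨hDsub, hjD, hDcap⟩ := hCL j hjB
        rcases ((CL j) ∩ (CL j₀)).eq_empty_or_nonempty with hem | ⟨j', hj'⟩
        · refine ⟨CL j, ?_, hjD, Or.inl ⟨?_, hDcap⟩⟩
          · intro a ha
            refine Finset.mem_sdiff.mpr ⟨hDsub ha, fun hac => ?_⟩
            have : a ∈ (CL j) ∩ (CL j₀) := Finset.mem_inter.mpr ⟨ha, hac⟩
            simp [hem] at this
          · have h1 := hcmax j hjB
            have h2 : c - 1 ≤ M := le_max_right _ _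
            omega
        · obtain ⟨hj'D, hj'C0⟩ := Finset.mem_inter.mp hj'
          refine ⟨CL j \ CL j₀, ?_, Finset.mem_sdiff.mpr ⟨hjD, hjC0⟩, Or.inr ?_⟩
          · intro a ha
            obtain ⟨haD, haC⟩ := Finset.mem_sdiff.mp ha
            exact Finset.mem_sdiff.mpr ⟨hDsub haD, haC⟩
          · have hXj' : X j' ⊆ (CL j₀).biUnion X :=
              fun e he => Finset.mem_biUnion.mpr ⟨j', hj'C0, he⟩
            have hdisj : Disjoint (((CL j \ CL j₀).biUnion X) \ (CL j₀).biUnion X) (X j') :=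
              Finset.disjoint_left.mpr (fun e he hee => (Finset.mem_sdiff.mp he).2 (hXj' hee))
            have hsubU : (((CL j \ CL j₀).biUnion X) \ (CL j₀).biUnion X) ∪ X j'
                ⊆ (CL j).biUnion X := by
              apply Finset.union_subset
              · intro e he
                obtain ⟨heB, _⟩ := Finset.mem_sdiff.mp he
                obtain ⟨a, ha, hea⟩ := Finset.mem_biUnion.mp heB
                exact Finset.mem_biUnion.mpr ⟨a, (Finset.mem_sdiff.mp ha).1, hea⟩
              · intro e he
                exact Finset.mem_biUnion.mpr ⟨j', hj'D, he⟩
            have hcard := Finset.card_le_card hsubU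
            rw [Finset.card_union_of_disjoint hdisj] at hcard
            have hβj' := hβ j' (hDsub hj'D)
            have h1 := hcmax j hjB
            have h2 : c - 1 ≤ M := le_max_right _ _
            omega
      have hEsplit : E ⊆ ((CL j₀).biUnion X) ∪
          (((B' \ CL j₀).biUnion X) \ (CL j₀).biUnion X) := by
        intro e he
        obtain ⟨j, hjB, hej⟩ := Finset.mem_biUnion.mp he
        by_cases hjC : j ∈ CL j₀
        · exact Finset.mem_union_left _ (Finset.mem_biUnion.mpr ⟨j, hjC, hej⟩)
        · by_cases heY : e ∈ (CL j₀).biUnion X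
          · exact Finset.mem_union_left _ heY
          · exact Finset.mem_union_right _ (Finset.mem_sdiff.mpr
              ⟨Finset.mem_biUnion.mpr ⟨j, Finset.mem_sdiff.mpr ⟨hjB, hjC⟩, hej⟩, heY⟩)
      have hEcard : E.card ≤ (t + c) + (B' \ CL j₀).card * M := by
        calc E.card ≤ (((CL j₀).biUnion X) ∪
            (((B' \ CL j₀).biUnion X) \ (CL j₀).biUnion X)).card := Finset.card_le_card hEsplit
          _ ≤ ((CL j₀).biUnion X).card
              + (((B' \ CL j₀).biUnion X) \ (CL j₀).biUnion X).card := Finset.card_union_le _ _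
          _ ≤ (t + c) + (B' \ CL j₀).card * M := by
              have h1 : ((CL j₀).biUnion X).card ≤ t + c := by rw [← hj₀c']; exact hC0cap
              exact Nat.add_le_add h1 hsubapp
      have hRcard : (B' \ CL j₀).card = B'.card - c := by
        rw [Finset.card_sdiff_of_subset hC0sub, hj₀c']
      set b := B'.card with hbdef
      have hcb : c ≤ b := by rw [← hj₀c']; exact Finset.card_le_card hC0sub
      -- arithmetic
      obtain ⟨e, hbe⟩ : ∃ e, b = c + e := ⟨b - c, by omega⟩
      have hEb : E.card ≤ t + c + e * M := by
        rw [hRcard] at hEcard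
        have : b - c = e := by omega
        rw [this] at hEcard
        exact hEcard
      have hTd : T = d + t := by omega
      rcases le_total (c - 1) (t + 1) with hcase | hcase
      · -- M = t+1
        have hMeq : M = t + 1 := max_eq_left hcase
        have h1 : E.card ≤ b * (t + 1) := by
          rw [hMeq] at hEb
          have h2 : t + c + e * (t+1) ≤ (c + e) * (t + 1) := by nlinarith
          rw [hbe]
          exact le_trans hEb h2
        have h2 : b * (t+1) ≤ d * (t+1) := Nat.mul_le_mul_right _ hbd
        have h3 : d + E.card ≤ d * (t + 2) := by
          have h31 : E.card ≤ d * (t+1) := le_trans h1 h2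
          calc d + E.card ≤ d + d * (t+1) := Nat.add_le_add_left h31 d
            _ = d * (t + 2) := by ring
        have h4 : d * (t + 2) * 4 ≤ (T + 2)^2 := by
          have hTd' : (T:ℤ) = (d:ℤ) + (t:ℤ) := by exact_mod_cast hTd
          zify
          nlinarith [sq_nonneg ((d:ℤ) - ((t:ℤ) + 2)), hTd']
        have h5 : d * (t + 2) ≤ (T + 2)^2 / 4 :=
          (Nat.le_div_iff_mul_le (by norm_num : (0:ℕ) < 4)).mpr h4
        rw [nat_div4] at h5
        exact le_trans h3 h5
      · -- M = c - 1
        have hMeq : M = c - 1 := max_eq_right hcase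
        obtain ⟨c', hcc⟩ : ∃ c', c = c' + 1 := ⟨c - 1, by omega⟩
        have h1 : E.card ≤ t + c + e * c' := by
          rw [hMeq] at hEb
          have hcc' : c - 1 = c' := by omega
          rw [hcc'] at hEb
          exact hEb
        have h2 : (e + 1) * c' * 4 ≤ T^2 := by
          have hbT2 : c' + 1 + e ≤ T := by omega
          have hbT2' : (c':ℤ) + 1 + (e:ℤ) ≤ (T:ℤ) := by exact_mod_cast hbT2
          zify
          nlinarith [sq_nonneg ((e:ℤ) + 1 - (c':ℤ)), hbT2',
            (by positivity : (0:ℤ) ≤ (c':ℤ)), (by positivity : (0:ℤ) ≤ (e:ℤ))]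
        have h3 : (e + 1) * c' ≤ T^2 / 4 :=
          (Nat.le_div_iff_mul_le (by norm_num : (0:ℕ) < 4)).mpr h2
        have hq : (e + 1) * c' = c' + e * c' := by ring
        have hfinal : d + E.card ≤ T + 1 + (e + 1) * c' := by
          have := h1
          linarith
        calc d + E.card ≤ T + 1 + (e + 1) * c' := hfinal
          _ ≤ T + 1 + T^2/4 := Nat.add_le_add_left h3 _
          _ = T + T^2/4 + 1 := add_right_comm T 1 (T^2/4)
  -- good vertices outside E are in V*
  have hVsub : ∀ i ∈ Good \ E, i ∈ Vstar := by
    intro i hi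
    obtain ⟨hiG, hiE⟩ := Finset.mem_sdiff.mp hi
    rw [hVstar]
    refine ⟨hGoodV' i hiG, ?_, ?_⟩
    · rw [hedge_good i i ((hGoodmem i).mp hiG), (hGoodmem i).mp hiG, sub_self, inner_zero_right]
    · intro j hjV'
      by_cases hjg : ybar j = y j
      · rw [hedge_good i j ((hGoodmem i).mp hiG), hjg, sub_self, inner_zero_right]
      · have hjB : j ∈ B' := by
          rw [hB'def, Finset.mem_filter]
          exact ⟨Finset.mem_univ j, hjV', hjg⟩
        rw [hedge_good i j ((hGoodmem i).mp hiG)]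
        by_contra hne
        exact hiE (Finset.mem_biUnion.mpr ⟨j, hjB,
          Finset.mem_filter.mpr ⟨hiG, hne⟩⟩)
  have hVcard : (Good \ E).card ≤ Vstar.ncard := by
    have h1 : ((Good \ E : Finset (Fin N)) : Set (Fin N)) ⊆ Vstar := by
      intro i hi
      exact hVsub i (by simpa using hi)
    calc (Good \ E).card = ((Good \ E : Finset (Fin N)) : Set (Fin N)).ncard :=
        (Set.ncard_coe_finset _).symm
      _ ≤ Vstar.ncard := Set.ncard_le_ncard h1 (Set.toFinite _)
  have hGE : Good.card ≤ (Good \ E).card + E.card := by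
    have hsub : Good ⊆ (Good \ E) ∪ E := by
      intro i hi
      by_cases h : i ∈ E
      · exact Finset.mem_union_right _ h
      · exact Finset.mem_union_left _ (Finset.mem_sdiff.mpr ⟨hi, h⟩)
    calc Good.card ≤ ((Good \ E) ∪ E).card := Finset.card_le_card hsub
      _ ≤ (Good \ E).card + E.card := Finset.card_union_le _ _
  refine ⟨?_, hcorrect⟩
  set F := T + T ^ 2 / 4 + 1 with hF
  omega
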